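/- Let ψ : I → ℝ^d be an injective C¹ map on an interval I with λ := inf{|ψ'(x)| : x ∈ I} > 0 and with ψ' M-Lipschitz. Then any arc-length reparametrization of ψ has (2M/λ²)-Lipschitz derivative; in particular, ψ(I) is a simple C^{1,1} curve with parameter 2M/λ². -/

import Mathlib

open Set Metric intervalIntegral

noncomputable section

private lemma unit_diff_aux {E : Type*} [NormedAddCommGroup E] [NormedSpace ℝ E]
    {a b : E} {lam : ℝ} (hl : 0 < lam) (ha : lam ≤ ‖a‖) (hb : lam ≤ ‖b‖) :
    ‖‖a‖⁻¹ • a - ‖b‖⁻¹ • b‖ ≤ 2 / lam * ‖a - b‖ := by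
  have hA : 0 < ‖a‖ := lt_of_lt_of_le hl ha
  have hB : 0 < ‖b‖ := lt_of_lt_of_le hl hb
  have key : ‖a‖⁻¹ • a - ‖b‖⁻¹ • b = ‖a‖⁻¹ • (a - b) + (‖a‖⁻¹ - ‖b‖⁻¹) • b := by
    module
  rw [key]
  have h1 : ‖‖a‖⁻¹ • (a - b)‖ ≤ ‖a - b‖ / lam := by
    rw [norm_smul, Real.norm_eq_abs, abs_of_pos (inv_pos.2 hA)]
    rw [div_eq_inv_mul]
    gcongr
  have h2 : ‖(‖a‖⁻¹ - ‖b‖⁻¹) • b‖ ≤ ‖a - b‖ / lam := by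
    rw [norm_smul, Real.norm_eq_abs]
    have : ‖a‖⁻¹ - ‖b‖⁻¹ = (‖b‖ - ‖a‖) / (‖a‖ * ‖b‖) := by
      field_simp
    rw [this, abs_div, abs_of_pos (mul_pos hA hB)]
    have habs : |‖b‖ - ‖a‖| ≤ ‖a - b‖ := by
      rw [abs_sub_comm]
      simpa using abs_norm_sub_norm_le a b
    rw [div_mul_eq_mul_div, div_le_div_iff₀ (mul_pos hA hB) hl]
    calc |‖b‖ - ‖a‖| * ‖b‖ * lam ≤ ‖a - b‖ * ‖b‖ * ‖a‖ := by gcongr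
      _ = ‖a - b‖ * (‖a‖ * ‖b‖) := by ring
  calc ‖‖a‖⁻¹ • (a - b) + (‖a‖⁻¹ - ‖b‖⁻¹) • b‖
      ≤ ‖‖a‖⁻¹ • (a - b)‖ + ‖(‖a‖⁻¹ - ‖b‖⁻¹) • b‖ := norm_add_le _ _
    _ ≤ ‖a - b‖ / lam + ‖a - b‖ / lam := add_le_add h1 h2
    _ = 2 / lam * ‖a - b‖ := by ring

/-- A regular injective C¹ curve with M-Lipschitz derivative and speed bounded below by
λ > 0 is a simple C^{1,1} curve with parameter 2M/λ². -/
theorem stmt17 {d : ℕ} (I : Set ℝ) (hI : I.OrdConnected)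
    (ψ ψ' : ℝ → EuclideanSpace ℝ (Fin d)) (lam M : ℝ) (hlam : 0 < lam) (hM : 0 < M)
    (hderiv : ∀ t ∈ I, HasDerivWithinAt ψ (ψ' t) I t)
    (hcont : ContinuousOn ψ' I)
    (hlow : ∀ t ∈ I, lam ≤ ‖ψ' t‖)
    (hlip : LipschitzOnWith (Real.toNNReal M) ψ' I)
    (hinj : InjOn ψ I) :
    ∃ (J : Set ℝ) (γ γ' : ℝ → EuclideanSpace ℝ (Fin d)),
      J.OrdConnected ∧ InjOn γ J ∧ γ '' J = ψ '' I ∧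
      (∀ t ∈ J, HasDerivWithinAt γ (γ' t) J t ∧ ‖γ' t‖ = 1) ∧
      LipschitzOnWith (Real.toNNReal (2 * M / lam ^ 2)) γ' J := by
  rcases I.eq_empty_or_nonempty with rfl | ⟨t0, ht0⟩
  · exact ⟨∅, ψ, ψ', Set.ordConnected_empty, injOn_empty _, by simp,
      fun t ht => absurd ht (notMem_empty t), by simp⟩
  -- extend the speed to a globally Lipschitz function f ≥ lam
  have hnormlip : LipschitzOnWith (Real.toNNReal M) (fun t => ‖ψ' t‖) I := by
    simpa [Function.comp_def] using lipschitzWith_one_norm.comp_lipschitzOnWith hlip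
  obtain ⟨g, hg_lip, hg_eq⟩ := hnormlip.extend_real
  set f : ℝ → ℝ := fun x => max (g x) lam with hf_def
  have hf_lip : LipschitzWith (Real.toNNReal M) f := hg_lip.max_const lam
  have hf_cont : Continuous f := hf_lip.continuous
  have hf_eq : ∀ x ∈ I, f x = ‖ψ' x‖ := by
    intro x hx
    have h1 : g x = ‖ψ' x‖ := (hg_eq hx).symm
    simp only [hf_def, h1]
    exact max_eq_left (hlow x hx)
  have hf_lb : ∀ x, lam ≤ f x := fun x => le_max_right _ _
  have hf_pos : ∀ x, 0 < f x := fun x => lt_of_lt_of_le hlam (hf_lb x)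
  -- the arc-length function σ
  set σ : ℝ → ℝ := fun t => ∫ s in t0..t, f s with hσ_def
  have hint : ∀ a b : ℝ, IntervalIntegrable f MeasureTheory.volume a b :=
    fun a b => hf_cont.intervalIntegrable a b
  have hσderiv : ∀ t, HasDerivAt σ (f t) t := fun t =>
    integral_hasDerivAt_right (hint t0 t)
      (hf_cont.stronglyMeasurable.stronglyMeasurableAtFilter)
      hf_cont.continuousAt
  have hσcont : Continuous σ := by
    have : Differentiable ℝ σ := fun t => (hσderiv t).differentiableAt
    exact this.continuous
  have hσ_gap : ∀ x y : ℝ, y ≤ x → lam * (x - y) ≤ σ x - σ y := by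
    intro x y hxy
    have h1 : σ x - σ y = ∫ s in y..x, f s := by
      rw [hσ_def]
      exact integral_interval_sub_left (hint t0 x) (hint t0 y)
    have h2 : (∫ _ in y..x, lam) ≤ ∫ s in y..x, f s :=
      integral_mono_on hxy (intervalIntegrable_const) (hint y x)
        (fun s _ => hf_lb s)
    rw [h1]
    simpa [smul_eq_mul, mul_comm] using h2
  have hσmono : StrictMono σ := by
    intro x y hxy
    have := hσ_gap y x hxy.le
    nlinarith
  have hσsurj : Function.Surjective σ := by
    apply hσcont.surjective
    · apply Filter.tendsto_atTop_mono' _ (_ : ∀ᶠ t in Filter.atTop, σ t0 + lam * (t - t0) ≤ σ t)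
      · have : Filter.Tendsto (fun t : ℝ => σ t0 + lam * (t - t0)) Filter.atTop Filter.atTop := by
          apply Filter.tendsto_atTop_add_const_left
          apply Filter.Tendsto.const_mul_atTop hlam
          exact Filter.tendsto_atTop_add_const_right _ _ Filter.tendsto_id
        exact this
      · filter_upwards [Filter.eventually_ge_atTop t0] with t ht
        have := hσ_gap t t0 ht
        linarith
    · apply Filter.tendsto_atBot_mono' _ (_ : ∀ᶠ t in Filter.atBot, σ t ≤ σ t0 + lam * (t - t0))
      · have : Filter.Tendsto (fun t : ℝ => σ t0 + lam * (t - t0)) Filter.atBot Filter.atBot := by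
          apply Filter.tendsto_atBot_add_const_left
          apply Filter.Tendsto.const_mul_atBot hlam
          exact Filter.tendsto_atBot_add_const_right _ _ Filter.tendsto_id
        exact this
      · filter_upwards [Filter.eventually_le_atBot t0] with t ht
        have := hσ_gap t0 t ht
        linarith
  set e : ℝ ≃o ℝ := StrictMono.orderIsoOfSurjective σ hσmono hσsurj with he_def
  have he_apply : ∀ x, e x = σ x := fun x => by
    exact congrFun (StrictMono.coe_orderIsoOfSurjective σ hσmono hσsurj) x
  set τ : ℝ → ℝ := fun s => e.symm s with hτ_def
  have hτσ : ∀ x, τ (σ x) = x := by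
    intro x; rw [hτ_def, ← he_apply]; exact e.symm_apply_apply x
  have hστ : ∀ s, σ (τ s) = s := by
    intro s; rw [hτ_def, ← he_apply]; exact e.apply_symm_apply s
  have hτcont : Continuous τ := e.symm.continuous
  have hτderiv : ∀ s, HasDerivAt τ ((f (τ s))⁻¹) s := by
    intro s
    exact HasDerivAt.of_local_left_inverse hτcont.continuousAt (hσderiv (τ s))
      (ne_of_gt (hf_pos _)) (Filter.Eventually.of_forall hστ)
  have hτlip : ∀ s t : ℝ, |τ s - τ t| ≤ lam⁻¹ * |s - t| := by
    intro s t
    rcases le_total (τ t) (τ s) with h | h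
    · have hgap := hσ_gap (τ s) (τ t) h
      rw [hστ, hστ] at hgap
      rw [abs_of_nonneg (by linarith), le_inv_mul_iff₀ hlam]
      calc lam * (τ s - τ t) ≤ s - t := hgap
        _ ≤ |s - t| := le_abs_self _
    · have hgap := hσ_gap (τ t) (τ s) h
      rw [hστ, hστ] at hgap
      rw [abs_of_nonpos (by linarith), le_inv_mul_iff₀ hlam]
      calc lam * -(τ s - τ t) = lam * (τ t - τ s) := by ring
        _ ≤ t - s := hgap
        _ ≤ |s - t| := by rw [abs_sub_comm]; exact le_abs_self _
  set J : Set ℝ := σ '' I with hJ_def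
  have hmaps : MapsTo τ J I := by
    rintro s ⟨x, hx, rfl⟩
    rw [hτσ]; exact hx
  refine ⟨J, ψ ∘ τ, fun s => (f (τ s))⁻¹ • ψ' (τ s), ?_, ?_, ?_, ?_, ?_⟩
  · -- OrdConnected
    constructor
    rintro s ⟨x, hx, rfl⟩ t ⟨y, hy, rfl⟩ z hz
    refine ⟨τ z, ?_, hστ z⟩
    apply hI.out hx hy
    constructor
    · calc x = τ (σ x) := (hτσ x).symm
        _ ≤ τ z := e.symm.monotone hz.1
    · calc τ z ≤ τ (σ y) := e.symm.monotone hz.2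
        _ = y := hτσ y
  · -- InjOn
    exact hinj.comp (e.symm.injective.injOn) hmaps
  · -- image
    have hstep : τ '' J = I := by
      rw [hJ_def, Set.image_image]
      exact (Set.image_congr fun x _ => hτσ x).trans (Set.image_id I)
    calc (ψ ∘ τ) '' J = ψ '' (τ '' J) := by rw [Set.image_comp]
      _ = ψ '' I := by rw [hstep]
  · -- derivative and unit speed
    rintro s hs
    have hx : τ s ∈ I := hmaps hs
    have hψ := hderiv (τ s) hx
    have hτd : HasDerivWithinAt τ ((f (τ s))⁻¹) J s := (hτderiv s).hasDerivWithinAt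
    refine ⟨hψ.scomp s hτd hmaps, ?_⟩
    rw [norm_smul, Real.norm_eq_abs, hf_eq _ hx,
      abs_of_pos (inv_pos.2 (lt_of_lt_of_le hlam (hlow _ hx)))]
    exact inv_mul_cancel₀ (ne_of_gt (lt_of_lt_of_le hlam (hlow _ hx)))
  · -- Lipschitz bound on γ'
    rw [lipschitzOnWith_iff_dist_le_mul]
    intro s hs t ht
    have hxs : τ s ∈ I := hmaps hs
    have hxt : τ t ∈ I := hmaps ht
    rw [Real.coe_toNNReal _ (by positivity)]
    rw [dist_eq_norm, Real.dist_eq]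
    rw [hf_eq _ hxs, hf_eq _ hxt]
    have step1 : ‖‖ψ' (τ s)‖⁻¹ • ψ' (τ s) - ‖ψ' (τ t)‖⁻¹ • ψ' (τ t)‖
        ≤ 2 / lam * ‖ψ' (τ s) - ψ' (τ t)‖ :=
      unit_diff_aux hlam (hlow _ hxs) (hlow _ hxt)
    have step2 : ‖ψ' (τ s) - ψ' (τ t)‖ ≤ M * |τ s - τ t| := by
      have := hlip.dist_le_mul _ hxs _ hxt
      rw [Real.coe_toNNReal _ hM.le, dist_eq_norm, Real.dist_eq] at this
      exact this
    have step3 := hτlip s t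
    calc ‖‖ψ' (τ s)‖⁻¹ • ψ' (τ s) - ‖ψ' (τ t)‖⁻¹ • ψ' (τ t)‖
        ≤ 2 / lam * ‖ψ' (τ s) - ψ' (τ t)‖ := step1
      _ ≤ 2 / lam * (M * (lam⁻¹ * |s - t|)) := by
          have h4 : ‖ψ' (τ s) - ψ' (τ t)‖ ≤ M * (lam⁻¹ * |s - t|) :=
            step2.trans (by gcongr)
          gcongr
      _ = 2 * M / lam ^ 2 * |s - t| := by field_simp
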